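/- Let P = ∑ γ_n t^n be tame. The sequence (X_n(P)) of opposite polynomials is finite rationally accumulating of period h (i.e., Ω(P) is finite and for each residue class e mod h the subsequence over n ≡ e (mod h) converges, with h minimal) if and only if the sequence (γ_{n−1}/γ_n) is finite rationally accumulating of period h. -/

import Mathlib

open Filter

/-- Tameness of a coefficient sequence: `γ n ≠ 0` and `u ≤ |γ (n-1) / γ n| ≤ v`
    for all `n ≥ N`. -/
def Tame (γ : ℕ → ℂ) (u v : ℝ) (N : ℕ) : Prop :=
  0 < u ∧ 0 < v ∧ (∀ n ≥ N, γ n ≠ 0) ∧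
    ∀ n ≥ N + 1, u ≤ ‖γ (n - 1) / γ n‖ ∧ ‖γ (n - 1) / γ n‖ ≤ v

/-- The opposite polynomial `X_n(P) = ∑_{k=0}^n (γ_{n-k}/γ_n) s^k`, viewed as its
    coefficient sequence in `ℂ[[s]] ≅ (ℕ → ℂ)` with the product topology. -/
noncomputable def oppPoly (γ : ℕ → ℂ) (n : ℕ) : ℕ → ℂ :=
  fun k => if k ≤ n then γ (n - k) / γ n else 0

/-- The space `Ω(P)` of opposite series: the set of cluster points of the sequence
    of opposite polynomials in the coefficientwise (product) topology. -/
def OmegaP (γ : ℕ → ℂ) : Set (ℕ → ℂ) :=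
  {a | MapClusterPt a atTop (oppPoly γ)}


/-- A sequence in a topological space is finite rationally accumulating of period `h`:
    its cluster set is finite, every congruence-class subsequence mod `h` converges,
    and `h` is minimal with this property. -/
def FinRatAccum {α : Type*} [TopologicalSpace α] (x : ℕ → α) (h : ℕ) : Prop :=
  0 < h ∧ {a | MapClusterPt a atTop x}.Finite ∧
    (∀ e < h, ∃ L, Tendsto (fun m => x (e + h * m)) atTop (nhds L)) ∧
    ∀ h' : ℕ, 0 < h' → (∀ e < h', ∃ L, Tendsto (fun m => x (e + h' * m)) atTop (nhds L)) →
      h ≤ h'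

/- ### Auxiliary lemmas -/

/-- If all congruence classes mod `h` converge, then the subsequence along
    `c + h * m` converges for any `c`. -/
lemma aux_shift {α : Type*} [TopologicalSpace α] (x : ℕ → α) (h : ℕ) (hh : 0 < h)
    (hc : ∀ e < h, ∃ L, Tendsto (fun m => x (e + h * m)) atTop (nhds L)) (c : ℕ) :
    ∃ L, Tendsto (fun m => x (c + h * m)) atTop (nhds L) := by
  obtain ⟨L, hL⟩ := hc (c % h) (Nat.mod_lt c hh)
  refine ⟨L, ?_⟩
  have h2 := hL.comp (tendsto_add_atTop_nat (c / h))
  refine h2.congr fun m => ?_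
  show x (c % h + h * (m + c / h)) = x (c + h * m)
  congr 1
  calc c % h + h * (m + c / h) = (c % h + h * (c / h)) + h * m := by ring
    _ = c + h * m := by rw [Nat.mod_add_div]

/-- If all congruence classes mod `h` converge, then the subsequence along
    `e + h * m - i` converges for any `e`, `i`. -/
lemma aux_shift_sub {α : Type*} [TopologicalSpace α] (x : ℕ → α) (h : ℕ) (hh : 0 < h)
    (hc : ∀ e < h, ∃ L, Tendsto (fun m => x (e + h * m)) atTop (nhds L)) (e i : ℕ) :
    ∃ L, Tendsto (fun m => x (e + h * m - i)) atTop (nhds L) := by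
  obtain ⟨L, hL⟩ := aux_shift x h hh hc (e + h * i - i)
  refine ⟨L, ?_⟩
  have h2 := hL.comp (tendsto_sub_atTop_nat i)
  refine h2.congr' ?_
  filter_upwards [eventually_ge_atTop i] with m hm
  obtain ⟨d, rfl⟩ := Nat.exists_eq_add_of_le hm
  have hi : i ≤ e + h * i := le_add_of_nonneg_of_le (Nat.zero_le e) (Nat.le_mul_of_pos_left i hh)
  show x (e + h * i - i + h * (i + d - i)) = x (e + h * (i + d) - i)
  congr 1
  rw [Nat.add_sub_cancel_left, Nat.mul_add]
  omega

/-- Telescoping product formula for the coefficients of the opposite polynomials. -/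
lemma oppPoly_coord (γ : ℕ → ℂ) (N : ℕ) (hγ : ∀ n ≥ N, γ n ≠ 0) (k : ℕ) :
    ∀ n, N + k ≤ n →
      oppPoly γ n k = ∏ i ∈ Finset.range k, (γ (n - i - 1) / γ (n - i)) := by
  induction k with
  | zero =>
    intro n hn
    simp only [oppPoly, Finset.range_zero, Finset.prod_empty, Nat.sub_zero,
      if_pos (Nat.zero_le n)]
    exact div_self (hγ n (by omega))
  | succ k ih =>
    intro n hn
    rw [Finset.prod_range_succ, ← ih n (by omega)]
    have h1 : γ (n - k) ≠ 0 := hγ _ (by omega)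
    have h2 : γ n ≠ 0 := hγ n (by omega)
    simp only [oppPoly, if_pos (show k + 1 ≤ n by omega), if_pos (show k ≤ n by omega)]
    have h3 : n - (k + 1) = n - k - 1 := by omega
    rw [h3]
    field_simp

/-- Equivalence of convergence of all congruence-class subsequences of the opposite
    polynomials and of the ratio sequence. -/
lemma classes_iff (γ : ℕ → ℂ) (N : ℕ) (hγ : ∀ n ≥ N, γ n ≠ 0) (h' : ℕ) (hh' : 0 < h') :
    (∀ e < h', ∃ L, Tendsto (fun m => oppPoly γ (e + h' * m)) atTop (nhds L)) ↔
    (∀ e < h', ∃ L, Tendsto (fun m => γ (e + h' * m - 1) / γ (e + h' * m)) atTop (nhds L)) := by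
  constructor
  · intro H e he
    obtain ⟨F, hF⟩ := H e he
    refine ⟨F 1, Tendsto.congr' ?_ ((tendsto_pi_nhds.mp hF) 1)⟩
    filter_upwards [eventually_ge_atTop 1] with m hm
    have h1 : 1 ≤ e + h' * m := le_add_of_nonneg_of_le (Nat.zero_le e)
      (le_trans hm (Nat.le_mul_of_pos_left m hh'))
    simp only [oppPoly, if_pos h1]
  · intro H e he
    have coord : ∀ k : ℕ, ∃ Lk : ℂ,
        Tendsto (fun m => oppPoly γ (e + h' * m) k) atTop (nhds Lk) := by
      intro k
      have hsub : ∀ i : ℕ, ∃ L : ℂ,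
          Tendsto (fun m => γ (e + h' * m - i - 1) / γ (e + h' * m - i)) atTop (nhds L) := by
        intro i
        obtain ⟨L, hL⟩ := aux_shift_sub (fun n => γ (n - 1) / γ n) h' hh' H e i
        exact ⟨L, hL⟩
      choose Li hLi using hsub
      refine ⟨∏ i ∈ Finset.range k, Li i, ?_⟩
      have hprod := tendsto_finset_prod (Finset.range k)
        (fun i _ => hLi i)
      refine Tendsto.congr' ?_ hprod
      filter_upwards [eventually_ge_atTop (N + k)] with m hm
      have hnk : N + k ≤ e + h' * m := le_add_of_nonneg_of_le (Nat.zero_le e)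
        (le_trans hm (Nat.le_mul_of_pos_left m hh'))
      exact (oppPoly_coord γ N hγ k (e + h' * m) hnk).symm
    choose Lk hLk using coord
    exact ⟨Lk, tendsto_pi_nhds.mpr hLk⟩

lemma clusterPt_finset_sup {α β : Type*} [TopologicalSpace α] {a : α} (s : Finset β)
    (F : β → Filter α) (hc : ClusterPt a (s.sup F)) : ∃ i ∈ s, ClusterPt a (F i) := by
  classical
  induction s using Finset.induction_on with
  | empty =>
    rw [Finset.sup_empty] at hc
    exact absurd hc.neBot (by simp)
  | @insert b t hb ih =>
    rw [Finset.sup_insert] at hc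
    have : NeBot ((nhds a ⊓ F b) ⊔ (nhds a ⊓ t.sup F)) := by
      rw [← inf_sup_left]; exact hc.neBot
    rcases Filter.sup_neBot.mp this with h1 | h2
    · exact ⟨b, Finset.mem_insert_self b t, h1⟩
    · obtain ⟨i, hi, hci⟩ := ih h2
      exact ⟨i, Finset.mem_insert_of_mem hi, hci⟩

/-- A cluster point of a sequence is a cluster point of one of its congruence-class
    subsequences. -/
lemma cluster_of_classes {α : Type*} [TopologicalSpace α] {x : ℕ → α} {h : ℕ} (hh : 0 < h)
    {a : α} (ha : MapClusterPt a atTop x) :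
    ∃ e < h, MapClusterPt a atTop (fun m => x (e + h * m)) := by
  set G : Fin h → Filter α := fun e => map (fun m => x (e.1 + h * m)) atTop with hG
  have hle : map x atTop ≤ ⨆ e, G e := by
    intro s hs
    rw [Filter.mem_iSup] at hs
    have hall : ∀ᶠ m in atTop, ∀ e : Fin h, x (e.1 + h * m) ∈ s :=
      eventually_all.mpr fun e => hs e
    obtain ⟨M, hM⟩ := eventually_atTop.mp hall
    rw [mem_map]
    refine mem_atTop_sets.mpr ⟨h * M + h, fun n hn => ?_⟩
    have hne : n % h < h := Nat.mod_lt _ hh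
    have hdiv : M ≤ n / h := by
      rw [Nat.le_div_iff_mul_le hh, Nat.mul_comm]
      omega
    have := hM (n / h) hdiv ⟨n % h, hne⟩
    simpa only [Nat.mod_add_div, Set.mem_preimage] using this
  have hcl : ClusterPt a (⨆ e, G e) := ha.clusterPt.mono hle
  have hsup : (Finset.univ : Finset (Fin h)).sup G = ⨆ e, G e := by
    rw [Finset.sup_eq_iSup]
    simp
  obtain ⟨e, _, hce⟩ := clusterPt_finset_sup Finset.univ G (by rwa [hsup])
  exact ⟨e.1, e.2, hce⟩

/-- If all congruence classes mod `h` converge, the cluster set is finite. -/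
lemma clusterSet_finite {α : Type*} [TopologicalSpace α] [T2Space α] (x : ℕ → α) (h : ℕ)
    (hh : 0 < h) (hc : ∀ e < h, ∃ L, Tendsto (fun m => x (e + h * m)) atTop (nhds L)) :
    {a | MapClusterPt a atTop x}.Finite := by
  choose L hL using fun e : Fin h => hc e.1 e.2
  refine Set.Finite.subset (Set.finite_range L) ?_
  intro a ha
  obtain ⟨e, he, hae⟩ := cluster_of_classes hh ha
  refine ⟨⟨e, he⟩, ?_⟩
  have hne : NeBot (nhds a ⊓ nhds (L ⟨e, he⟩)) :=
    hae.clusterPt.neBot.mono (inf_le_inf_left _ (hL ⟨e, he⟩))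
  exact (eq_of_nhds_neBot hne).symm

/-- The opposite polynomials of a tame series are finite rationally accumulating of
    period `h` iff the ratio sequence `γ_{n-1}/γ_n` is. -/
theorem finRatAccum_iff (γ : ℕ → ℂ) (u v : ℝ) (N : ℕ) (htame : Tame γ u v N) (h : ℕ) :
    FinRatAccum (oppPoly γ) h ↔ FinRatAccum (fun n => γ (n - 1) / γ n) h := by
  obtain ⟨-, -, hγ, -⟩ := htame
  have key : ∀ h' : ℕ, 0 < h' →
      ((∀ e < h', ∃ L, Tendsto (fun m => oppPoly γ (e + h' * m)) atTop (nhds L)) ↔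
       (∀ e < h', ∃ L, Tendsto (fun m => (fun n => γ (n - 1) / γ n) (e + h' * m)) atTop
         (nhds L))) :=
    fun h' hh' => classes_iff γ N hγ h' hh'
  constructor
  · rintro ⟨hpos, -, hconv, hmin⟩
    have hconv' := (key h hpos).mp hconv
    exact ⟨hpos, clusterSet_finite _ h hpos hconv', hconv',
      fun h' hp hc => hmin h' hp ((key h' hp).mpr hc)⟩
  · rintro ⟨hpos, -, hconv, hmin⟩
    have hconv' := (key h hpos).mpr hconv
    exact ⟨hpos, clusterSet_finite _ h hpos hconv', hconv',
      fun h' hp hc => hmin h' hp ((key h' hp).mp hc)⟩
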